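/- arXiv:1311.1464 — 3 statements merged into one kernel-verified Lean document; each statement's English description precedes it below -/
import Mathlib

section
/- The quasi-shuffle product on the tensor algebra over a commutative (nonunital) Q-algebra A, defined recursively by (a·w) ⋆ (b·v) = a·(w ⋆ (b·v)) + b·((a·w) ⋆ v) + (ab)·(w ⋆ v), is commutative and associative. -/
set_option linter.unusedSectionVars false
set_option maxHeartbeats 1000000


variable {A : Type*} [NonUnitalCommRing A] [Module ℚ A]
  [SMulCommClass ℚ A A] [IsScalarTower ℚ A A]

noncomputable def qshW : List A → List A → (List A →₀ ℚ)
  | [], v => Finsupp.single v 1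
  | a :: w, [] => Finsupp.single (a :: w) 1
  | a :: w, b :: v =>
      (qshW w (b :: v)).mapDomain (a :: ·) + (qshW (a :: w) v).mapDomain (b :: ·)
        + (qshW w v).mapDomain ((a * b) :: ·)
termination_by u v => u.length + v.length
decreasing_by
  all_goals simp [List.length_cons]
  all_goals omega

lemma qshW_nil_left (v : List A) : qshW [] v = Finsupp.single v 1 := by rw [qshW]

lemma qshW_nil_right (u : List A) : qshW u [] = Finsupp.single u 1 := by
  cases u <;> rw [qshW]

lemma qshW_cons_cons (a b : A) (u v : List A) :
    qshW (a :: u) (b :: v) =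
      (qshW u (b :: v)).mapDomain (a :: ·) + (qshW (a :: u) v).mapDomain (b :: ·)
        + (qshW u v).mapDomain ((a * b) :: ·) := by rw [qshW]

/-- Linearization in the second argument. -/
noncomputable def qB1 (u : List A) : (List A →₀ ℚ) →ₗ[ℚ] (List A →₀ ℚ) :=
  Finsupp.lsum ℚ fun v => LinearMap.toSpanSingleton ℚ _ (qshW u v)

/-- Full bilinear quasi-shuffle product. -/
noncomputable def qB : (List A →₀ ℚ) →ₗ[ℚ] (List A →₀ ℚ) →ₗ[ℚ] (List A →₀ ℚ) :=
  Finsupp.lsum ℚ fun u => LinearMap.toSpanSingleton ℚ _ (qB1 u)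

lemma qB_single_single (u v : List A) :
    qB (Finsupp.single u 1) (Finsupp.single v 1) = qshW u v := by
  simp [qB, qB1, LinearMap.toSpanSingleton_apply]

noncomputable def qshL (x y : List A →₀ ℚ) : List A →₀ ℚ :=
  x.sum fun u c => y.sum fun v d => (c * d) • qshW u v

lemma qB1_apply (u : List A) (y : List A →₀ ℚ) :
    qB1 u y = y.sum fun v d => d • qshW u v := by
  rw [qB1, Finsupp.lsum_apply]
  rfl

lemma qB_apply (x y : List A →₀ ℚ) :
    qB x y = x.sum fun u c => c • qB1 u y := by
  rw [qB, Finsupp.lsum_apply]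
  rw [Finsupp.sum, Finsupp.sum, LinearMap.coe_sum, Finset.sum_apply]
  simp [LinearMap.toSpanSingleton_apply]

lemma qshL_eq_qB (x y : List A →₀ ℚ) : qshL x y = qB x y := by
  rw [qshL, qB_apply]
  refine Finset.sum_congr rfl fun u _ => ?_
  simp only []
  rw [qB1_apply, Finsupp.smul_sum]
  refine Finset.sum_congr rfl fun v _ => ?_
  simp only []
  rw [smul_smul]

lemma qB_single_single' (u v : List A) (c d : ℚ) :
    qB (Finsupp.single u c) (Finsupp.single v d) = (c * d) • qshW u v := by
  rw [show Finsupp.single u c = c • Finsupp.single u 1 by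
        rw [Finsupp.smul_single, smul_eq_mul, mul_one],
      show Finsupp.single v d = d • Finsupp.single v 1 by
        rw [Finsupp.smul_single, smul_eq_mul, mul_one]]
  simp only [map_smul, LinearMap.smul_apply, qB_single_single, smul_smul]
  rw [mul_comm]

lemma qB_unit_left (x : List A →₀ ℚ) : qB (Finsupp.single ([] : List A) 1) x = x := by
  induction x using Finsupp.induction_linear with
  | zero => simp
  | add f g hf hg => rw [map_add, hf, hg]
  | single v c =>
      rw [qB_single_single', qshW_nil_left, one_mul, Finsupp.smul_single, smul_eq_mul, mul_one]

lemma qB_unit_right (x : List A →₀ ℚ) : qB x (Finsupp.single ([] : List A) 1) = x := by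
  induction x using Finsupp.induction_linear with
  | zero => simp
  | add f g hf hg => rw [map_add, LinearMap.add_apply, hf, hg]
  | single v c =>
      rw [qB_single_single', qshW_nil_right, mul_one, Finsupp.smul_single, smul_eq_mul, mul_one]

lemma qB_mapDomain_left (a b : A) (v : List A) (x : List A →₀ ℚ) :
    qB (x.mapDomain (a :: ·)) (Finsupp.single (b :: v) 1) =
      (qB x (Finsupp.single (b :: v) 1)).mapDomain (a :: ·)
      + (qB (x.mapDomain (a :: ·)) (Finsupp.single v 1)).mapDomain (b :: ·)
      + (qB x (Finsupp.single v 1)).mapDomain ((a * b) :: ·) := by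
  induction x using Finsupp.induction_linear with
  | zero => simp
  | add f g hf hg =>
      simp only [Finsupp.mapDomain_add, map_add, LinearMap.add_apply, hf, hg]
      abel
  | single u c =>
      simp only [Finsupp.mapDomain_single, qB_single_single', mul_one, one_mul,
        Finsupp.mapDomain_smul]
      rw [qshW_cons_cons]
      simp only [smul_add]

lemma qB_mapDomain_right (a b : A) (u : List A) (y : List A →₀ ℚ) :
    qB (Finsupp.single (a :: u) 1) (y.mapDomain (b :: ·)) =
      (qB (Finsupp.single u 1) (y.mapDomain (b :: ·))).mapDomain (a :: ·)
      + (qB (Finsupp.single (a :: u) 1) y).mapDomain (b :: ·)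
      + (qB (Finsupp.single u 1) y).mapDomain ((a * b) :: ·) := by
  induction y using Finsupp.induction_linear with
  | zero => simp
  | add f g hf hg =>
      simp only [Finsupp.mapDomain_add, map_add, LinearMap.add_apply, hf, hg]
      abel
  | single v c =>
      simp only [Finsupp.mapDomain_single, qB_single_single', mul_one, one_mul,
        Finsupp.mapDomain_smul]
      rw [qshW_cons_cons]
      simp only [smul_add]

lemma qB_L1 (a b c : A) (u v w : List A) :
    qB (qshW (a :: u) (b :: v)) (Finsupp.single (c :: w) 1) =
      (qB (qshW u (b :: v)) (Finsupp.single (c :: w) 1)).mapDomain (a :: ·)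
      + (qB (qshW (a :: u) v) (Finsupp.single (c :: w) 1)).mapDomain (b :: ·)
      + (qB (qshW u v) (Finsupp.single (c :: w) 1)).mapDomain ((a * b) :: ·)
      + (qB (qshW (a :: u) (b :: v)) (Finsupp.single w 1)).mapDomain (c :: ·)
      + (qB (qshW u (b :: v)) (Finsupp.single w 1)).mapDomain ((a * c) :: ·)
      + (qB (qshW (a :: u) v) (Finsupp.single w 1)).mapDomain ((b * c) :: ·)
      + (qB (qshW u v) (Finsupp.single w 1)).mapDomain ((a * b * c) :: ·) := by
  conv_lhs => rw [qshW_cons_cons]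
  conv_rhs => rw [qshW_cons_cons a b u v]
  simp only [map_add, LinearMap.add_apply, Finsupp.mapDomain_add, qB_mapDomain_left]
  abel

lemma qB_L2 (a b c : A) (u v w : List A) :
    qB (Finsupp.single (a :: u) 1) (qshW (b :: v) (c :: w)) =
      (qB (Finsupp.single u 1) (qshW (b :: v) (c :: w))).mapDomain (a :: ·)
      + (qB (Finsupp.single (a :: u) 1) (qshW v (c :: w))).mapDomain (b :: ·)
      + (qB (Finsupp.single (a :: u) 1) (qshW (b :: v) w)).mapDomain (c :: ·)
      + (qB (Finsupp.single u 1) (qshW v (c :: w))).mapDomain ((a * b) :: ·)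
      + (qB (Finsupp.single u 1) (qshW (b :: v) w)).mapDomain ((a * c) :: ·)
      + (qB (Finsupp.single (a :: u) 1) (qshW v w)).mapDomain ((b * c) :: ·)
      + (qB (Finsupp.single u 1) (qshW v w)).mapDomain ((a * (b * c)) :: ·) := by
  conv_lhs => rw [qshW_cons_cons]
  conv_rhs => rw [qshW_cons_cons b c v w]
  simp only [map_add, LinearMap.add_apply, Finsupp.mapDomain_add, qB_mapDomain_right]
  abel

theorem qshW_assoc : ∀ u v w : List A,
    qB (qshW u v) (Finsupp.single w 1) = qB (Finsupp.single u 1) (qshW v w)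
  | [], v, w => by rw [qshW_nil_left, qB_single_single, qB_unit_left]
  | a :: u, [], w => by rw [qshW_nil_right, qshW_nil_left]
  | a :: u, b :: v, [] => by rw [qshW_nil_right, qB_single_single, qB_unit_right]
  | a :: u, b :: v, c :: w => by
      rw [qB_L1, qB_L2,
        qshW_assoc u (b :: v) (c :: w), qshW_assoc (a :: u) v (c :: w),
        qshW_assoc u v (c :: w), qshW_assoc (a :: u) (b :: v) w,
        qshW_assoc u (b :: v) w, qshW_assoc (a :: u) v w,
        qshW_assoc u v w, mul_assoc a b c]
      abel
termination_by u v w => u.length + v.length + w.length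
decreasing_by all_goals simp [List.length_cons] <;> omega

theorem qshW_comm : ∀ u v : List A, qshW u v = qshW v u
  | [], v => by rw [qshW_nil_left, qshW_nil_right]
  | a :: u, [] => by rw [qshW_nil_left, qshW_nil_right]
  | a :: u, b :: v => by
      rw [qshW_cons_cons, qshW_cons_cons, qshW_comm u (b :: v), qshW_comm (a :: u) v,
        qshW_comm u v, mul_comm a b]
      abel
termination_by u v => u.length + v.length
decreasing_by all_goals simp [List.length_cons] <;> omega

theorem qB_comm (x y : List A →₀ ℚ) : qB x y = qB y x := by
  induction x using Finsupp.induction_linear with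
  | zero => simp
  | add f g hf hg => simp only [map_add, LinearMap.add_apply, hf, hg]
  | single u c =>
      induction y using Finsupp.induction_linear with
      | zero => simp
      | add f g hf hg => simp only [map_add, LinearMap.add_apply, hf, hg]
      | single v d => rw [qB_single_single', qB_single_single', qshW_comm, mul_comm]

theorem qB_assoc (x y z : List A →₀ ℚ) : qB (qB x y) z = qB x (qB y z) := by
  induction x using Finsupp.induction_linear with
  | zero => simp
  | add f g hf hg => simp only [map_add, LinearMap.add_apply, hf, hg]
  | single u c =>
      induction y using Finsupp.induction_linear with
      | zero => simp
      | add f g hf hg => simp only [map_add, LinearMap.add_apply, hf, hg]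
      | single v d =>
          induction z using Finsupp.induction_linear with
          | zero => simp
          | add f g hf hg => simp only [map_add, hf, hg]
          | single w e =>
              rw [qB_single_single',
                show Finsupp.single w e = e • Finsupp.single w 1 by
                  rw [Finsupp.smul_single, smul_eq_mul, mul_one],
                show Finsupp.single u c = c • Finsupp.single u 1 by
                  rw [Finsupp.smul_single, smul_eq_mul, mul_one],
                show Finsupp.single v d = d • Finsupp.single v 1 by
                  rw [Finsupp.smul_single, smul_eq_mul, mul_one]]
              simp only [map_smul, LinearMap.smul_apply, map_smul, smul_smul,
                qB_single_single]
              rw [qshW_assoc]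
              rw [show e * (c * d) = e * d * c by ring]


/-- The quasi-shuffle product is commutative and associative, with the empty
word as unit. -/
theorem quasiShuffle_comm_assoc :
    (∀ x : List A →₀ ℚ, qshL (Finsupp.single ([] : List A) 1) x = x ∧
      qshL x (Finsupp.single ([] : List A) 1) = x) ∧
    (∀ x y : List A →₀ ℚ, qshL x y = qshL y x) ∧
    (∀ x y z : List A →₀ ℚ, qshL (qshL x y) z = qshL x (qshL y z)) := by
  refine ⟨fun x => ⟨?_, ?_⟩, fun x y => ?_, fun x y z => ?_⟩
  · rw [qshL_eq_qB, qB_unit_left]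
  · rw [qshL_eq_qB, qB_unit_right]
  · rw [qshL_eq_qB, qshL_eq_qB, qB_comm]
  · rw [qshL_eq_qB, qshL_eq_qB, qshL_eq_qB, qshL_eq_qB, qB_assoc]
end

section
/- For a formal power series P(X) = Σ_{i≥1} p_i X^i ∈ X·Q[[X]] and a commutative Q-algebra A, define φ_P : T(A) → T(A) by φ_P(a₁...aₙ) = Σ_{k=1}^n Σ_{i₁+...+i_k = n} p_{i₁}···p_{i_k} (a₁···a_{i₁}) ⊗ ... ⊗ (a_{i₁+...+i_{k-1}+1}···aₙ), where products inside parentheses are taken in A. Then φ_P is a coalgebra morphism for the deconcatenation coproduct: Δ∘φ_P = (φ_P⊗φ_P)∘Δ. -/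
variable {A : Type*} [NonUnitalCommRing A] [Module ℚ A]
  [SMulCommClass ℚ A A] [IsScalarTower ℚ A A]

/-- `φ_P` on a basis word: `φ_P(a₁...aₙ) = Σ_k Σ_{i₁+...+i_k=n} p_{i₁}···p_{i_k}
(a₁···a_{i₁}) ⊗ ... ⊗ (a_{i₁+...+i_{k-1}+1}···aₙ)`, defined recursively over the
first block; `(w.take i).foldl (·*·) a` is the internal product in `A` of the
first block `a :: w.take i` of size `i+1`. -/
noncomputable def phiW (p : ℕ → ℚ) : List A → (List A →₀ ℚ)
  | [] => Finsupp.single [] 1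
  | a :: w => ∑ i ∈ Finset.range (w.length + 1),
      p (i + 1) • (phiW p (w.drop i)).mapDomain
        (List.cons ((w.take i).foldl (· * ·) a))
termination_by l => l.length
decreasing_by simp [List.length_cons] <;> omega

/-- Linear extension of `φ_P` to `T(A)`. -/
noncomputable def phi (p : ℕ → ℚ) (x : List A →₀ ℚ) : List A →₀ ℚ :=
  x.sum fun w c => c • phiW p w

/-- Deconcatenation coproduct. -/
noncomputable def delta (x : List A →₀ ℚ) : (List A × List A) →₀ ℚ :=
  x.sum fun w c => c • ∑ k ∈ Finset.range (w.length + 1),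
    Finsupp.single (w.take k, w.drop k) (1 : ℚ)

/-- Tensor product of two elements of `T(A)` in the model of `T(A) ⊗ T(A)`. -/
noncomputable def tensorF (x y : List A →₀ ℚ) : (List A × List A) →₀ ℚ :=
  x.sum fun u c => y.sum fun v d => Finsupp.single (u, v) (c * d)

/-- `φ_P ⊗ φ_P` on `T(A) ⊗ T(A)`. -/
noncomputable def phi2 (p : ℕ → ℚ) (x : (List A × List A) →₀ ℚ) :
    (List A × List A) →₀ ℚ :=
  x.sum fun q c => c • tensorF (phiW p q.1) (phiW p q.2)

open Finsupp Finset

-- linear-map versions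
noncomputable def deltaW (w : List A) : (List A × List A) →₀ ℚ :=
  ∑ k ∈ Finset.range (w.length + 1), Finsupp.single (w.take k, w.drop k) (1 : ℚ)

noncomputable def deltaL : (List A →₀ ℚ) →ₗ[ℚ] ((List A × List A) →₀ ℚ) :=
  Finsupp.lsum ℚ fun w => LinearMap.toSpanSingleton ℚ _ (deltaW w)

lemma delta_eq (x : List A →₀ ℚ) : delta x = deltaL x := by
  simp [delta, deltaL, deltaW, Finsupp.lsum_apply, LinearMap.toSpanSingleton_apply, Finsupp.sum]

noncomputable def phiL (p : ℕ → ℚ) : (List A →₀ ℚ) →ₗ[ℚ] (List A →₀ ℚ) :=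
  Finsupp.lsum ℚ fun w => LinearMap.toSpanSingleton ℚ _ (phiW p w)

lemma phi_eq (p : ℕ → ℚ) (x : List A →₀ ℚ) : phi p x = phiL p x := by
  simp [phi, phiL, Finsupp.lsum_apply, LinearMap.toSpanSingleton_apply, Finsupp.sum]

noncomputable def phi2L (p : ℕ → ℚ) :
    ((List A × List A) →₀ ℚ) →ₗ[ℚ] ((List A × List A) →₀ ℚ) :=
  Finsupp.lsum ℚ fun q => LinearMap.toSpanSingleton ℚ _ (tensorF (phiW p q.1) (phiW p q.2))

lemma phi2_eq (p : ℕ → ℚ) (x : (List A × List A) →₀ ℚ) : phi2 p x = phi2L p x := by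
  simp [phi2, phi2L, Finsupp.lsum_apply, LinearMap.toSpanSingleton_apply, Finsupp.sum]

noncomputable def innerL (u : List A) :
    (List A →₀ ℚ) →ₗ[ℚ] ((List A × List A) →₀ ℚ) :=
  Finsupp.lsum ℚ fun v => LinearMap.toSpanSingleton ℚ _ (Finsupp.single (u, v) (1 : ℚ))

noncomputable def tensorL :
    (List A →₀ ℚ) →ₗ[ℚ] (List A →₀ ℚ) →ₗ[ℚ] ((List A × List A) →₀ ℚ) :=
  Finsupp.lsum ℚ fun u => LinearMap.toSpanSingleton ℚ _ (innerL u)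

lemma tensorF_eq (x y : List A →₀ ℚ) : tensorF x y = tensorL x y := by
  simp only [tensorF, tensorL, Finsupp.lsum_apply, LinearMap.finsupp_sum_apply,
    LinearMap.toSpanSingleton_apply, LinearMap.smul_apply, innerL]
  refine Finsupp.sum_congr fun u _ => ?_
  rw [Finsupp.smul_sum]
  refine Finsupp.sum_congr fun v _ => ?_
  simp [Finsupp.smul_single, mul_comm]

lemma tensorL_single_single (u v : List A) (c d : ℚ) :
    tensorL (Finsupp.single u c) (Finsupp.single v d) = Finsupp.single (u, v) (c * d) := by
  simp [tensorL, innerL, Finsupp.lsum_single, LinearMap.toSpanSingleton_apply,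
    Finsupp.smul_single, mul_comm]

set_option linter.unusedSectionVars false

lemma phiW_nil (p : ℕ → ℚ) : phiW p ([] : List A) = Finsupp.single [] 1 := by rw [phiW]

lemma phiW_cons (p : ℕ → ℚ) (a : A) (w : List A) :
    phiW p (a :: w) = ∑ i ∈ Finset.range (w.length + 1),
      p (i + 1) • Finsupp.lmapDomain ℚ ℚ (List.cons ((w.take i).foldl (· * ·) a))
        (phiW p (w.drop i)) := by
  rw [phiW]; simp [Finsupp.lmapDomain_apply]

lemma deltaL_single (w : List A) (c : ℚ) :
    deltaL (Finsupp.single w c) = c • deltaW w := by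
  simp [deltaL]

lemma tensor_mapDomain_left (h : List A → List A) (f g : List A →₀ ℚ) :
    tensorL (Finsupp.lmapDomain ℚ ℚ h f) g
      = Finsupp.lmapDomain ℚ ℚ (Prod.map h id) (tensorL f g) := by
  induction f using Finsupp.induction_linear with
  | zero => simp
  | add f f' hf hf' =>
    simp only [map_add, LinearMap.add_apply, hf, hf']
  | single u c =>
    rw [Finsupp.lmapDomain_apply, Finsupp.mapDomain_single]
    induction g using Finsupp.induction_linear with
    | zero => simp
    | add g g' hg hg' => simp only [map_add, hg, hg']
    | single v d =>
      rw [tensorL_single_single, tensorL_single_single, Finsupp.lmapDomain_apply,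
        Finsupp.mapDomain_single]
      rfl

lemma deltaL_mapDomain_cons (b : A) (f : List A →₀ ℚ) :
    deltaL (Finsupp.lmapDomain ℚ ℚ (List.cons b) f)
      = tensorL (Finsupp.single [] 1) (Finsupp.lmapDomain ℚ ℚ (List.cons b) f)
        + Finsupp.lmapDomain ℚ ℚ (Prod.map (List.cons b) id) (deltaL f) := by
  induction f using Finsupp.induction_linear with
  | zero => simp
  | add f f' hf hf' => simp only [map_add, hf, hf']; abel
  | single u c =>
    rw [Finsupp.lmapDomain_apply, Finsupp.mapDomain_single, deltaL_single, deltaL_single]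
    rw [deltaW, deltaW]
    rw [show (b :: u).length + 1 = (u.length + 1) + 1 from rfl, Finset.sum_range_succ']
    simp only [List.take_succ_cons, List.drop_succ_cons, List.take_zero, List.drop_zero]
    rw [smul_add, add_comm]
    congr 1
    · rw [tensorL_single_single]
      simp [Finsupp.smul_single, one_mul]
    · rw [map_smul, Finsupp.lmapDomain_apply, Finsupp.mapDomain_finset_sum]
      simp [Finsupp.mapDomain_single]

lemma sum_triangle {M : Type*} [AddCommMonoid M] (n : ℕ) (F : ℕ → ℕ → M) :
    ∑ i ∈ Finset.range (n + 1), ∑ j ∈ Finset.range (n - i + 1), F i j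
      = ∑ k ∈ Finset.range (n + 1), ∑ i ∈ Finset.range (k + 1), F i (k - i) := by
  rw [Finset.sum_sigma', Finset.sum_sigma']
  refine Finset.sum_nbij' (fun x => ⟨x.1 + x.2, x.1⟩) (fun x => ⟨x.2, x.1 - x.2⟩)
    ?_ ?_ ?_ ?_ ?_
  · rintro ⟨i, j⟩ h
    simp only [Finset.mem_sigma, Finset.mem_range] at h ⊢
    omega
  · rintro ⟨k, i⟩ h
    simp only [Finset.mem_sigma, Finset.mem_range] at h ⊢
    omega
  · rintro ⟨i, j⟩ h
    simp only [Finset.mem_sigma, Finset.mem_range] at h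
    simp only [show i + j - i = j from by omega]
  · rintro ⟨k, i⟩ h
    simp only [Finset.mem_sigma, Finset.mem_range] at h
    simp only [show i + (k - i) = k from by omega]
  · rintro ⟨i, j⟩ h
    simp only [Finset.mem_sigma, Finset.mem_range] at h
    simp only [Nat.add_sub_cancel_left]

lemma key (p : ℕ → ℚ) : ∀ n : ℕ, ∀ w : List A, w.length ≤ n →
    deltaL (phiW p w) = ∑ k ∈ Finset.range (w.length + 1),
      tensorL (phiW p (w.take k)) (phiW p (w.drop k)) := by
  intro n
  induction n with
  | zero =>
    intro w hw
    rw [List.length_eq_zero_iff.mp (Nat.le_zero.mp hw)]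
    simp [phiW_nil, deltaL_single, deltaW, tensorL_single_single]
  | succ n ih =>
    intro w hw
    match w with
    | [] => simp [phiW_nil, deltaL_single, deltaW, tensorL_single_single]
    | a :: w' =>
      have hw' : w'.length ≤ n := by simpa using hw
      -- LHS
      rw [phiW_cons, map_sum]
      simp only [map_smul, deltaL_mapDomain_cons, smul_add]
      rw [Finset.sum_add_distrib]
      -- first chunk is tensorL (single [] 1) (phiW p (a :: w'))
      have chunk1 : ∑ i ∈ Finset.range (w'.length + 1),
          p (i + 1) • tensorL (Finsupp.single [] 1)
            (Finsupp.lmapDomain ℚ ℚ (List.cons ((w'.take i).foldl (· * ·) a))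
              (phiW p (w'.drop i)))
          = tensorL (Finsupp.single [] 1) (phiW p (a :: w')) := by
        rw [phiW_cons, map_sum]
        simp only [map_smul]
      rw [chunk1]
      -- second chunk
      have chunk2 : ∀ i ∈ Finset.range (w'.length + 1),
          p (i + 1) • Finsupp.lmapDomain ℚ ℚ
              (Prod.map (List.cons ((w'.take i).foldl (· * ·) a)) id)
              (deltaL (phiW p (w'.drop i)))
          = ∑ j ∈ Finset.range (w'.length - i + 1),
              p (i + 1) • tensorL
                (Finsupp.lmapDomain ℚ ℚ (List.cons ((w'.take i).foldl (· * ·) a))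
                  (phiW p ((w'.drop i).take j)))
                (phiW p (w'.drop (i + j))) := by
        intro i hi
        rw [ih (w'.drop i) (le_trans (by simp) hw'), map_sum, Finset.smul_sum]
        rw [List.length_drop]
        refine Finset.sum_congr rfl fun j hj => ?_
        rw [tensor_mapDomain_left, List.drop_drop]
      rw [Finset.sum_congr rfl chunk2, sum_triangle]
      -- RHS
      conv_rhs => rw [show (a :: w').length + 1 = (w'.length + 1) + 1 from rfl,
        Finset.sum_range_succ']
      simp only [List.take_succ_cons, List.drop_succ_cons, List.take_zero, List.drop_zero,
        phiW_nil]
      rw [add_comm]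
      congr 1
      refine Finset.sum_congr rfl fun k hk => ?_
      have hk' : k ≤ w'.length := by simpa [Nat.lt_succ_iff] using hk
      rw [phiW_cons, map_sum, LinearMap.sum_apply]
      rw [List.length_take, Nat.min_eq_left hk']
      refine Finset.sum_congr rfl fun i hi => ?_
      have hi' : i ≤ k := by simpa [Nat.lt_succ_iff] using hi
      rw [map_smul, LinearMap.smul_apply]
      rw [List.take_take, Nat.min_eq_left hi', List.drop_take,
        show i + (k - i) = k from by omega]


/-- `φ_P` is a morphism of coalgebras for the deconcatenation coproduct:
`Δ ∘ φ_P = (φ_P ⊗ φ_P) ∘ Δ`. -/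
theorem phi_coalgebra_morphism (p : ℕ → ℚ) (x : List A →₀ ℚ) :
    delta (phi p x) = phi2 p (delta x) := by
  rw [delta_eq, phi_eq, delta_eq, phi2_eq]
  have : (deltaL.comp (phiL p) : (List A →₀ ℚ) →ₗ[ℚ] _)
      = (phi2L p).comp (deltaL (A := A)) := by
    apply Finsupp.lhom_ext
    intro w c
    simp only [LinearMap.comp_apply]
    rw [deltaL_single, map_smul, deltaW, map_sum]
    have hphiL : phiL p (Finsupp.single w c) = c • phiW p w := by simp [phiL]
    rw [hphiL, map_smul, key p w.length w le_rfl]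
    congr 1
    refine Finset.sum_congr rfl fun k hk => ?_
    simp [phi2L, tensorF_eq]
  exact LinearMap.congr_fun this x
end

section
/- For formal power series U ∈ X + X²·Q[[X]] (or with invertible linear coefficient) and V ∈ X·Q[[X]], the conjugation identity of coderivations holds at the level of power series: the series corresponding to φ_U⁻¹ ∘ D_V ∘ φ_U is (V∘U)/U′, i.e., Σ_{k≥p} (k−p+1) w_{k−p+1} U^k = U^p / U′ when V = X^p and W is the compositional inverse of U. -/
open PowerSeries

/-- Substitution of formal power series. -/
noncomputable def comp (P Q : PowerSeries ℚ) : PowerSeries ℚ :=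
  PowerSeries.mk fun n => ∑ i ∈ Finset.range (n + 1),
    PowerSeries.coeff (R := ℚ) i P * PowerSeries.coeff (R := ℚ) n (Q ^ i)

/-- The conjugation identity for coderivations at the level of power series:
if `W` is the compositional inverse of a tangent-to-identity `U`, then
`Σ_{k≥p} (k−p+1) w_{k−p+1} U^k = U^p / U′`, i.e. the left-hand side multiplied
by `U′` equals `U^p`.  (The sum is well defined since `coeff n (U^k) = 0` for
`k > n`, so each coefficient is a finite sum.) -/
theorem coderivation_conjugation (U W : PowerSeries ℚ) (p : ℕ) (hp : 1 ≤ p)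
    (hU0 : constantCoeff (R := ℚ) U = 0) (hU1 : PowerSeries.coeff (R := ℚ) 1 U = 1)
    (hW0 : constantCoeff (R := ℚ) W = 0) (hWU : comp W U = PowerSeries.X) :
    U.derivativeFun *
      (PowerSeries.mk fun n => ∑ k ∈ Finset.range (n + 1),
        (if p ≤ k then ((k - p + 1 : ℕ) : ℚ) * PowerSeries.coeff (R := ℚ) (k - p + 1) W
          else 0) * PowerSeries.coeff (R := ℚ) n (U ^ k)) = U ^ p := by
  classical
  set c : ℕ → ℚ := fun k =>
    if p ≤ k then ((k - p + 1 : ℕ) : ℚ) * PowerSeries.coeff (R := ℚ) (k - p + 1) W else 0 with hc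
  have hcoU : ∀ i q : ℕ, q < i → PowerSeries.coeff (R := ℚ) q (U ^ i) = 0 := by
    intro i q h
    exact PowerSeries.X_pow_dvd_iff.mp
      (pow_dvd_pow_of_dvd (PowerSeries.X_dvd_iff.mpr hU0) i) q h
  ext n
  rw [PowerSeries.coeff_mul]
  by_cases hpn : p ≤ n
  · -- main case
    set N := n - p + 1 with hN
    set T : PowerSeries ℚ := ∑ k ∈ Finset.range (n + 1), c k • U ^ k with hTdef
    set Pol : PowerSeries ℚ := ∑ i ∈ Finset.range (N + 1),
      (PowerSeries.coeff (R := ℚ) i W) • U ^ i with hPdef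
    have hST : ∀ q, q ≤ n →
        (∑ k ∈ Finset.range (q + 1), c k * PowerSeries.coeff (R := ℚ) q (U ^ k))
          = PowerSeries.coeff (R := ℚ) q T := by
      intro q hq
      rw [hTdef, map_sum]
      simp only [map_smul, smul_eq_mul]
      apply Finset.sum_subset (Finset.range_subset_range.mpr (by omega))
      intro k hk1 hk2
      rw [hcoU k q (by simp only [Finset.mem_range, not_lt] at hk2 ⊢; omega), mul_zero]
    have hPX : ∀ q, q ≤ N →
        PowerSeries.coeff (R := ℚ) q Pol = PowerSeries.coeff (R := ℚ) q (PowerSeries.X : PowerSeries ℚ) := by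
      intro q hq
      rw [← hWU, hPdef, map_sum]
      simp only [map_smul, smul_eq_mul]
      rw [comp, coeff_mk]
      symm
      apply Finset.sum_subset (Finset.range_subset_range.mpr (by omega))
      intro k hk1 hk2
      rw [hcoU k q (by simp only [Finset.mem_range, not_lt] at hk2 ⊢; omega), mul_zero]
    have hdP : ∀ b, b < N → PowerSeries.coeff (R := ℚ) b Pol.derivativeFun
        = PowerSeries.coeff (R := ℚ) b (1 : PowerSeries ℚ) := by
      intro b hb
      rw [show Pol.derivativeFun = d⁄dX ℚ Pol from rfl, PowerSeries.coeff_derivative, hPX (b + 1) (by omega),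
        PowerSeries.coeff_X, PowerSeries.coeff_one]
      rcases Nat.eq_zero_or_pos b with hb0 | hb0
      · subst hb0; norm_num
      · rw [if_neg (by omega), if_neg (by omega), zero_mul]
    have hdPol : Pol.derivativeFun = ∑ i ∈ Finset.range (N + 1),
        (((i : ℚ) * PowerSeries.coeff (R := ℚ) i W) • (U ^ (i - 1) * U.derivativeFun)) := by
      have h0 : Pol.derivativeFun = d⁄dX ℚ Pol := rfl
      rw [h0, hPdef, map_sum]
      refine Finset.sum_congr rfl fun i _ => ?_
      rw [Derivation.map_smul, Derivation.leibniz_pow]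
      have h1 : d⁄dX ℚ U = U.derivativeFun := rfl
      rw [h1]
      rw [smul_eq_mul, ← Nat.cast_smul_eq_nsmul ℚ (M := PowerSeries ℚ), smul_smul, mul_comm]
    have hT : U.derivativeFun * T = U ^ p * Pol.derivativeFun := by
      rw [hTdef, Finset.mul_sum, hdPol, Finset.mul_sum]
      have hzero : ∀ k ∈ Finset.range p, U.derivativeFun * (c k • U ^ k) = 0 := by
        intro k hk
        simp only [Finset.mem_range] at hk
        have : c k = 0 := by simp only [hc]; rw [if_neg (by omega)]
        rw [this, zero_smul, mul_zero]
      rw [show Finset.range (n + 1) = Finset.range p ∪ Finset.Ico p (n + 1) by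
        rw [Finset.range_eq_Ico, Finset.range_eq_Ico, Finset.Ico_union_Ico_eq_Ico (by omega) (by omega)],
        Finset.sum_union (by
          rw [Finset.range_eq_Ico]
          exact Finset.Ico_disjoint_Ico_consecutive 0 p (n + 1)),
        Finset.sum_eq_zero hzero, zero_add, Finset.sum_Ico_eq_sum_range,
        Finset.sum_range_succ']
      simp only [Nat.cast_zero, zero_mul, zero_smul, mul_zero, add_zero]
      have hNN : n + 1 - p = N := by rw [hN]; omega
      rw [hNN]
      refine Finset.sum_congr rfl fun j _ => ?_
      have hcj : c (p + j) = ((j + 1 : ℕ) : ℚ) * PowerSeries.coeff (R := ℚ) (j + 1) W := by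
        have e : p + j - p + 1 = j + 1 := by omega
        simp only [hc]
        rw [if_pos (Nat.le_add_right p j), e]
      rw [hcj]
      have h3 : j + 1 - 1 = j := by omega
      rw [h3]
      rw [PowerSeries.smul_eq_C_mul, PowerSeries.smul_eq_C_mul]
      push_cast
      ring
    calc
      ∑ x ∈ Finset.HasAntidiagonal.antidiagonal n, PowerSeries.coeff (R := ℚ) x.1 U.derivativeFun *
          PowerSeries.coeff (R := ℚ) x.2 (PowerSeries.mk fun m => ∑ k ∈ Finset.range (m + 1),
            c k * PowerSeries.coeff (R := ℚ) m (U ^ k))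
        = ∑ x ∈ Finset.HasAntidiagonal.antidiagonal n, PowerSeries.coeff (R := ℚ) x.1 U.derivativeFun *
            PowerSeries.coeff (R := ℚ) x.2 T := by
          refine Finset.sum_congr rfl fun x hx => ?_
          rw [Finset.HasAntidiagonal.mem_antidiagonal] at hx
          rw [PowerSeries.coeff_mk, hST x.2 (by omega)]
      _ = PowerSeries.coeff (R := ℚ) n (U.derivativeFun * T) := (PowerSeries.coeff_mul _ _ _).symm
      _ = PowerSeries.coeff (R := ℚ) n (U ^ p * Pol.derivativeFun) := by rw [hT]
      _ = ∑ x ∈ Finset.HasAntidiagonal.antidiagonal n, PowerSeries.coeff (R := ℚ) x.1 (U ^ p) *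
            PowerSeries.coeff (R := ℚ) x.2 (1 : PowerSeries ℚ) := by
          rw [PowerSeries.coeff_mul]
          refine Finset.sum_congr rfl fun x hx => ?_
          rw [Finset.HasAntidiagonal.mem_antidiagonal] at hx
          by_cases hx1 : p ≤ x.1
          · rw [hdP x.2 (by omega)]
          · rw [hcoU p x.1 (by omega), zero_mul, zero_mul]
      _ = PowerSeries.coeff (R := ℚ) n (U ^ p * 1) := (PowerSeries.coeff_mul _ _ _).symm
      _ = PowerSeries.coeff (R := ℚ) n (U ^ p) := by rw [mul_one]
  · -- easy case n < p
    rw [hcoU p n (by omega)]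
    apply Finset.sum_eq_zero
    intro x hx
    rw [Finset.HasAntidiagonal.mem_antidiagonal] at hx
    rw [PowerSeries.coeff_mk]
    have h0 : (∑ k ∈ Finset.range (x.2 + 1),
        (if p ≤ k then ((k - p + 1 : ℕ) : ℚ) * PowerSeries.coeff (R := ℚ) (k - p + 1) W else 0) *
          PowerSeries.coeff (R := ℚ) x.2 (U ^ k)) = 0 := by
      apply Finset.sum_eq_zero
      intro k hk
      simp only [Finset.mem_range] at hk
      rw [if_neg (by omega), zero_mul]
    rw [h0, mul_zero]
end
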